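/- For n ≥ 4, the set of dominant vertices of the order super commuting graph Δ^o(A_n) of the alternating group A_n is exactly {e}; that is, an even permutation σ ∈ A_n is a dominant vertex of Δ^o(A_n) if and only if σ is the identity. -/

import Mathlib

/-- The power graph of a group `G`: distinct `x, y` are adjacent iff one is a power
of the other, i.e. `x ∈ ⟨y⟩` or `y ∈ ⟨x⟩`. -/
def powerGraph (G : Type*) [Group G] : SimpleGraph G :=
  SimpleGraph.fromRel (fun x y => x ∈ Subgroup.zpowers y)

/-- The enhanced power graph of a group `G`: distinct `x, y` are adjacent iff they lie
in a common cyclic subgroup. -/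
def enhancedPowerGraph (G : Type*) [Group G] : SimpleGraph G :=
  SimpleGraph.fromRel
    (fun x y => ∃ z : G, x ∈ Subgroup.zpowers z ∧ y ∈ Subgroup.zpowers z)

/-- The commuting graph of a group `G`: distinct `x, y` are adjacent iff they commute. -/
def commutingGraph (G : Type*) [Group G] : SimpleGraph G :=
  SimpleGraph.fromRel (fun x y => x * y = y * x)

/-- The order super graph of a graph `A` on a group `G`: distinct `x, y` are adjacent iff
they have the same order, or some elements of the same orders are adjacent in `A`. -/
def orderSuper (G : Type*) [Group G] (A : SimpleGraph G) : SimpleGraph G :=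
  SimpleGraph.fromRel (fun x y =>
    orderOf x = orderOf y ∨
      ∃ x' y' : G, orderOf x' = orderOf x ∧ orderOf y' = orderOf y ∧ A.Adj x' y')

/-- The conjugacy super graph of a graph `A` on a group `G`: distinct `x, y` are adjacent
iff they are conjugate, or some conjugates of them are adjacent in `A`. -/
def conjSuper (G : Type*) [Group G] (A : SimpleGraph G) : SimpleGraph G :=
  SimpleGraph.fromRel (fun x y =>
    IsConj x y ∨ ∃ x' y' : G, IsConj x x' ∧ IsConj y y' ∧ A.Adj x' y')

/-- A vertex of a simple graph is dominant if it is adjacent to every other vertex. -/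
def IsDominantVertex {V : Type*} (Γ : SimpleGraph V) (v : V) : Prop :=
  ∀ w, w ≠ v → Γ.Adj v w


namespace AltNT

/-- Sum of the maximal prime powers dividing `N`. -/
def F (N : ℕ) : ℕ := ∑ p ∈ N.primeFactors, p ^ N.factorization p

lemma F_prime_pow {p a : ℕ} (hp : p.Prime) (ha : a ≠ 0) : F (p ^ a) = p ^ a := by
  unfold F
  rw [Nat.primeFactors_prime_pow ha hp, Finset.sum_singleton, hp.factorization_pow,
    Finsupp.single_eq_same]

lemma F_prime {p : ℕ} (hp : p.Prime) : F p = p := by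
  simpa using F_prime_pow hp one_ne_zero (p := p) (a := 1)

lemma F_mul_coprime {x y : ℕ} (hx : x ≠ 0) (hy : y ≠ 0) (h : Nat.Coprime x y) :
    F (x * y) = F x + F y := by
  unfold F
  rw [Nat.primeFactors_mul hx hy, Finset.sum_union h.disjoint_primeFactors]
  congr 1
  · apply Finset.sum_congr rfl
    intro p hp
    have hpx : p ∣ x := Nat.dvd_of_mem_primeFactors hp
    have hpd : ¬ p ∣ y := fun hd =>
      (Nat.Prime.one_lt (Nat.prime_of_mem_primeFactors hp)).ne'
        (Nat.eq_one_of_dvd_coprimes h hpx hd)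
    rw [Nat.factorization_mul hx hy]
    simp [Nat.factorization_eq_zero_of_not_dvd hpd]
  · apply Finset.sum_congr rfl
    intro p hp
    have hpy : p ∣ y := Nat.dvd_of_mem_primeFactors hp
    have hpd : ¬ p ∣ x := fun hd =>
      (Nat.Prime.one_lt (Nat.prime_of_mem_primeFactors hp)).ne'
        (Nat.eq_one_of_dvd_coprimes h hd hpy)
    rw [Nat.factorization_mul hx hy]
    simp [Nat.factorization_eq_zero_of_not_dvd hpd]

/-- product of values each ≥ 2 dominates the sum -/
lemma sum_le_prod {α : Type*} [DecidableEq α] (s : Finset α) (f : α → ℕ)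
    (h : ∀ x ∈ s, 2 ≤ f x) : ∑ x ∈ s, f x ≤ ∏ x ∈ s, f x := by
  induction s using Finset.induction_on with
  | empty => simp
  | @insert a s ha ih =>
    rw [Finset.sum_insert ha, Finset.prod_insert ha]
    have h2 : 2 ≤ f a := h a (Finset.mem_insert_self a s)
    have ih' := ih (fun x hx => h x (Finset.mem_insert_of_mem hx))
    rcases s.eq_empty_or_nonempty with rfl | hne
    · simp
    · have hp2 : 2 ≤ ∏ x ∈ s, f x := by
        obtain ⟨b, hb⟩ := hne
        calc 2 ≤ f b := h b (Finset.mem_insert_of_mem hb)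
        _ ≤ ∏ x ∈ s, f x := Finset.single_le_prod' (fun x hx => by
              have := h x (Finset.mem_insert_of_mem hx); omega) hb
      nlinarith

/-- product of prime powers (distinct primes) dividing ℓ divides ℓ -/
lemma prod_pp_dvd (P : Finset ℕ) (e : ℕ → ℕ) (ℓ : ℕ)
    (hP : ∀ p ∈ P, Nat.Prime p) (h : ∀ p ∈ P, p ^ e p ∣ ℓ) :
    (∏ p ∈ P, p ^ e p) ∣ ℓ := by
  induction P using Finset.induction_on with
  | empty => simp
  | @insert a s ha ih =>
    rw [Finset.prod_insert ha]
    have hco : Nat.Coprime (a ^ e a) (∏ p ∈ s, p ^ e p) := by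
      apply Nat.Coprime.pow_left
      apply Nat.Coprime.prod_right
      intro q hq
      apply Nat.Coprime.pow_right
      exact (Nat.coprime_primes (hP a (Finset.mem_insert_self a s))
        (hP q (Finset.mem_insert_of_mem hq))).mpr (fun hqa => ha (hqa ▸ hq))
    exact hco.mul_dvd_of_dvd_of_dvd (h a (Finset.mem_insert_self a s))
      (ih (fun p hp => hP p (Finset.mem_insert_of_mem hp))
          (fun p hp => h p (Finset.mem_insert_of_mem hp)))

/-- If `c * ∏ p^e p ∣ ℓ`, `ℓ > 0`, `c ≥ 2`, all `p^e p ≥ 2`, then `c + Σ p^e p ≤ ℓ`. -/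
lemma le_of_dvd_aux (P : Finset ℕ) (e : ℕ → ℕ) (c ℓ : ℕ) (hc : 2 ≤ c) (hl : 0 < ℓ)
    (h2 : ∀ p ∈ P, 2 ≤ p ^ e p)
    (hd : c * ∏ p ∈ P, p ^ e p ∣ ℓ) : c + ∑ p ∈ P, p ^ e p ≤ ℓ := by
  have hle : c * ∏ p ∈ P, p ^ e p ≤ ℓ := Nat.le_of_dvd hl hd
  have hsum : ∑ p ∈ P, p ^ e p ≤ ∏ p ∈ P, p ^ e p := sum_le_prod P (fun p => p ^ e p) h2
  rcases P.eq_empty_or_nonempty with rfl | ⟨b, hb⟩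
  · simpa using hle
  · have hp2 : 2 ≤ ∏ p ∈ P, p ^ e p := by
      have h1 : b ^ e b ≤ ∏ p ∈ P, p ^ e p :=
        Finset.single_le_prod' (f := fun p => p ^ e p)
          (fun x hx => le_trans (by omega) (h2 x hx)) hb
      exact le_trans (h2 b hb) h1
    have key : c + ∏ p ∈ P, p ^ e p ≤ c * ∏ p ∈ P, p ^ e p := Nat.add_le_mul hc hp2
    omega

/-- Core: if for each `p ∈ P` some member of `T` is divisible by `p ^ e p`, then the sum
of those prime powers is at most `T.sum`. -/
lemma core (e : ℕ → ℕ) (T : Multiset ℕ) (hT : ∀ ℓ ∈ T, 0 < ℓ)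
    (P : Finset ℕ) (hP : ∀ p ∈ P, Nat.Prime p ∧ 2 ≤ p ^ e p)
    (hw : ∀ p ∈ P, ∃ ℓ ∈ T, p ^ e p ∣ ℓ) :
    ∑ p ∈ P, p ^ e p ≤ T.sum := by
  induction T using Multiset.induction_on generalizing P with
  | empty =>
    have : P = ∅ := by
      by_contra h
      obtain ⟨p, hp⟩ := Finset.nonempty_of_ne_empty h
      obtain ⟨ℓ, hℓ, -⟩ := hw p hp
      simp at hℓ
    simp [this]
  | @cons ℓ₀ T' ih =>
    classical
    rw [Multiset.sum_cons]
    set P₁ := P.filter (fun p => p ^ e p ∣ ℓ₀) with hP₁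
    have hsplit : ∑ p ∈ P₁, p ^ e p + ∑ p ∈ P.filter (fun p => ¬ p ^ e p ∣ ℓ₀), p ^ e p
        = ∑ p ∈ P, p ^ e p := Finset.sum_filter_add_sum_filter_not P _ _
    have h1 : ∑ p ∈ P₁, p ^ e p ≤ ℓ₀ := by
      have hdvd : (∏ p ∈ P₁, p ^ e p) ∣ ℓ₀ :=
        prod_pp_dvd P₁ e ℓ₀ (fun p hp => (hP p (Finset.mem_of_mem_filter p hp)).1)
          (fun p hp => (Finset.mem_filter.mp hp).2)
      calc ∑ p ∈ P₁, p ^ e p ≤ ∏ p ∈ P₁, p ^ e p :=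
            sum_le_prod _ _ (fun p hp => (hP p (Finset.mem_of_mem_filter p hp)).2)
      _ ≤ ℓ₀ := Nat.le_of_dvd (hT ℓ₀ (Multiset.mem_cons_self _ _)) hdvd
    have h2 : ∑ p ∈ P.filter (fun p => ¬ p ^ e p ∣ ℓ₀), p ^ e p ≤ T'.sum := by
      apply ih (fun ℓ hℓ => hT ℓ (Multiset.mem_cons_of_mem hℓ))
      · intro p hp; exact hP p (Finset.mem_of_mem_filter p hp)
      · intro p hp
        obtain ⟨hpP, hnd⟩ := Finset.mem_filter.mp hp
        obtain ⟨ℓ, hℓ, hdvd⟩ := hw p hpP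
        rcases Multiset.mem_cons.mp hℓ with rfl | hmem
        · exact absurd hdvd hnd
        · exact ⟨ℓ, hmem, hdvd⟩
    omega


lemma multiset_lcm_ne_zero (T : Multiset ℕ) (h0 : 0 ∉ T) : T.lcm ≠ 0 := by
  induction T using Multiset.induction_on with
  | empty => simp
  | @cons a T' ih =>
    rw [Multiset.lcm_cons]
    have ha : a ≠ 0 := fun h => h0 (h ▸ Multiset.mem_cons_self a T')
    have h' : T'.lcm ≠ 0 := ih (fun h => h0 (Multiset.mem_cons_of_mem h))
    exact Nat.lcm_ne_zero ha h'

lemma pow_dvd_mem_of_dvd_lcm (T : Multiset ℕ) (h0 : 0 ∉ T) {p a : ℕ}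
    (hp : p.Prime) (ha : a ≠ 0) (h : p ^ a ∣ T.lcm) : ∃ ℓ ∈ T, p ^ a ∣ ℓ := by
  induction T using Multiset.induction_on with
  | empty =>
    exfalso
    simp only [Multiset.lcm_zero] at h
    have : p ∣ 1 := dvd_trans (dvd_pow_self p ha) (by simpa using h)
    exact hp.one_lt.ne' (Nat.eq_one_of_dvd_one this)
  | @cons ℓ₀ T' ih =>
    rw [Multiset.lcm_cons] at h
    have hℓ₀ : ℓ₀ ≠ 0 := fun hh => h0 (hh ▸ Multiset.mem_cons_self _ _)
    have hT' : T'.lcm ≠ 0 := multiset_lcm_ne_zero T' (fun hh => h0 (Multiset.mem_cons_of_mem hh))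
    have hfact := Nat.factorization_lcm hℓ₀ hT'
    have hle : a ≤ (Nat.lcm ℓ₀ T'.lcm).factorization p := by
      rw [← Nat.Prime.pow_dvd_iff_le_factorization hp (Nat.lcm_ne_zero hℓ₀ hT')]
      exact h
    rw [hfact, Finsupp.sup_apply] at hle
    rcases le_max_iff.mp hle with h1 | h1
    · exact ⟨ℓ₀, Multiset.mem_cons_self _ _,
        (Nat.Prime.pow_dvd_iff_le_factorization hp hℓ₀).mpr h1⟩
    · obtain ⟨ℓ, hℓ, hd⟩ := ih (fun hh => h0 (Multiset.mem_cons_of_mem hh))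
        ((Nat.Prime.pow_dvd_iff_le_factorization hp hT').mpr h1)
      exact ⟨ℓ, Multiset.mem_cons_of_mem hℓ, hd⟩

open Equiv Perm

lemma cycleType_pos {n : ℕ} (z : Equiv.Perm (Fin n)) : ∀ ℓ ∈ z.cycleType, 0 < ℓ :=
  fun ℓ hℓ => lt_of_lt_of_le (by norm_num) (Equiv.Perm.two_le_of_mem_cycleType hℓ)

lemma cycleType_zero_not_mem {n : ℕ} (z : Equiv.Perm (Fin n)) : (0:ℕ) ∉ z.cycleType :=
  fun h => absurd (Equiv.Perm.two_le_of_mem_cycleType h) (by norm_num)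

lemma factorization_ne_zero {N p : ℕ} (hp : p ∈ N.primeFactors) : N.factorization p ≠ 0 := by
  have h := Nat.mem_primeFactors.mp hp
  have := Nat.Prime.factorization_pos_of_dvd h.1 h.2.2 h.2.1
  omega

lemma hP_primeFactors (N : ℕ) :
    ∀ p ∈ N.primeFactors, Nat.Prime p ∧ 2 ≤ p ^ N.factorization p := by
  intro p hp
  have hprime := Nat.prime_of_mem_primeFactors hp
  exact ⟨hprime, le_trans hprime.two_le (Nat.le_self_pow (factorization_ne_zero hp) p)⟩

lemma lb1 {n : ℕ} (z : Equiv.Perm (Fin n)) : F (orderOf z) ≤ n := by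
  have hsum : z.cycleType.sum = z.support.card := Equiv.Perm.sum_cycleType z
  have hcard : z.support.card ≤ n := by
    simpa using Finset.card_le_univ z.support
  have hcore : ∑ p ∈ (orderOf z).primeFactors, p ^ (orderOf z).factorization p
      ≤ z.cycleType.sum := by
    apply core _ _ (cycleType_pos z) _ (hP_primeFactors _)
    intro p hp
    apply pow_dvd_mem_of_dvd_lcm _ (cycleType_zero_not_mem z)
      (Nat.prime_of_mem_primeFactors hp) (factorization_ne_zero hp)
    rw [Equiv.Perm.lcm_cycleType]
    exact Nat.ordProj_dvd _ _
  unfold F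
  omega
lemma parity_filter_even (T : Multiset ℕ) :
    (T.sum + Multiset.card T) % 2 = (Multiset.card (T.filter (fun ℓ => Even ℓ))) % 2 := by
  classical
  induction T using Multiset.induction_on with
  | empty => simp
  | @cons a T ih =>
    rw [Multiset.sum_cons, Multiset.card_cons, Multiset.filter_cons]
    by_cases h : Even a
    · have ha : a % 2 = 0 := Nat.even_iff.mp h
      rw [if_pos h, Multiset.card_add, Multiset.card_singleton]
      omega
    · have ha : a % 2 = 1 := Nat.odd_iff.mp (Nat.not_even_iff_odd.mp h)
      rw [if_neg h, Multiset.card_add, Multiset.card_zero]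
      omega

lemma lb2 {n : ℕ} (z : Equiv.Perm (Fin n)) (hsign : Equiv.Perm.sign z = 1)
    (h2 : 2 ∣ orderOf z) : F (orderOf z) + 2 ≤ n := by
  classical
  set N := orderOf z with hN
  have hN0 : N ≠ 0 := (orderOf_pos z).ne'
  set T := z.cycleType with hT
  have hTpos : ∀ ℓ ∈ T, 0 < ℓ := cycleType_pos z
  have hT0 : (0:ℕ) ∉ T := cycleType_zero_not_mem z
  set e : ℕ → ℕ := fun p => N.factorization p with he
  have h2mem : 2 ∈ N.primeFactors := Nat.mem_primeFactors.mpr ⟨Nat.prime_two, h2, hN0⟩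
  have hν : e 2 ≠ 0 := factorization_ne_zero h2mem
  have hlcm : T.lcm = N := by rw [hT, Equiv.Perm.lcm_cycleType]
  have hwit : ∀ p ∈ N.primeFactors, ∃ ℓ ∈ T, p ^ e p ∣ ℓ := by
    intro p hp
    apply pow_dvd_mem_of_dvd_lcm T hT0 (Nat.prime_of_mem_primeFactors hp)
      (factorization_ne_zero hp)
    rw [hlcm]; exact Nat.ordProj_dvd _ _
  obtain ⟨ℓ₂, hℓ₂T, hℓ₂d⟩ := hwit 2 h2mem
  have hℓ₂even : Even ℓ₂ := even_iff_two_dvd.mpr (dvd_trans (dvd_pow_self 2 hν) hℓ₂d)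
  -- second even cycle
  have hparity : Even (T.sum + Multiset.card T) := by
    have hs := Equiv.Perm.sign_of_cycleType z
    rw [hsign] at hs
    exact (neg_one_pow_eq_one_iff_even (by decide)).mp hs.symm
  set T' := T.erase ℓ₂ with hT'
  have hcons : ℓ₂ ::ₘ T' = T := Multiset.cons_erase hℓ₂T
  have hcardf : Multiset.card (T.filter (fun ℓ => Even ℓ)) =
      1 + Multiset.card (T'.filter (fun ℓ => Even ℓ)) := by
    rw [← hcons, Multiset.filter_cons, if_pos hℓ₂even]
    simp [add_comm]
  have hodd : Multiset.card (T'.filter (fun ℓ => Even ℓ)) % 2 = 1 := by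
    have h1 := parity_filter_even T
    have h2' := Nat.even_iff.mp hparity
    omega
  have : 0 < Multiset.card (T'.filter (fun ℓ => Even ℓ)) := by omega
  obtain ⟨ℓ', hℓ'mem⟩ := Multiset.card_pos_iff_exists_mem.mp this
  have hℓ'T' : ℓ' ∈ T' := Multiset.mem_of_mem_filter hℓ'mem
  have hℓ'even : Even ℓ' := Multiset.of_mem_filter hℓ'mem
  set T'' := T'.erase ℓ' with hT''
  have hcons' : ℓ' ::ₘ T'' = T' := Multiset.cons_erase hℓ'T'
  -- sums
  have hsum2 : T.sum = ℓ₂ + T'.sum := by rw [← hcons, Multiset.sum_cons]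
  have hsum3 : T'.sum = ℓ' + T''.sum := by rw [← hcons', Multiset.sum_cons]
  -- prime partition
  set P : Finset ℕ := N.primeFactors.erase 2 with hPdef
  have hPsub : ∀ p ∈ P, p ∈ N.primeFactors := fun p hp => Finset.mem_of_mem_erase hp
  have hPne2 : ∀ p ∈ P, p ≠ 2 := fun p hp => Finset.ne_of_mem_erase hp
  have hFsplit : F N = 2 ^ e 2 + ∑ p ∈ P, p ^ e p := (Finset.add_sum_erase _ _ h2mem).symm
  set P₁ := P.filter (fun p => p ^ e p ∣ ℓ₂) with hP₁
  set Q₁ := P.filter (fun p => ¬ p ^ e p ∣ ℓ₂) with hQ₁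
  set P₂ := Q₁.filter (fun p => p ^ e p ∣ ℓ') with hP₂
  set P₃ := Q₁.filter (fun p => ¬ p ^ e p ∣ ℓ') with hP₃
  have hsplit1 : ∑ p ∈ P₁, p ^ e p + ∑ p ∈ Q₁, p ^ e p = ∑ p ∈ P, p ^ e p :=
    Finset.sum_filter_add_sum_filter_not P _ _
  have hsplit2 : ∑ p ∈ P₂, p ^ e p + ∑ p ∈ P₃, p ^ e p = ∑ p ∈ Q₁, p ^ e p :=
    Finset.sum_filter_add_sum_filter_not Q₁ _ _
  have hoddpp : ∀ p ∈ P, Nat.Coprime 2 (p ^ e p) := by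
    intro p hp
    exact Nat.Coprime.pow_right _
      ((Nat.coprime_primes Nat.prime_two (Nat.prime_of_mem_primeFactors (hPsub p hp))).mpr
        (fun h => hPne2 p hp h.symm))
  -- bound 1
  have hB1 : 2 ^ e 2 + ∑ p ∈ P₁, p ^ e p ≤ ℓ₂ := by
    apply le_of_dvd_aux P₁ e (2 ^ e 2) ℓ₂
    · exact le_trans (by norm_num) (Nat.le_self_pow hν 2)
    · exact hTpos ℓ₂ hℓ₂T
    · intro p hp; exact (hP_primeFactors N p (hPsub p (Finset.mem_of_mem_filter p hp))).2
    · apply Nat.Coprime.mul_dvd_of_dvd_of_dvd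
      · apply Nat.Coprime.pow_left
        apply Nat.Coprime.prod_right
        intro q hq; exact hoddpp q (Finset.mem_of_mem_filter q hq)
      · exact hℓ₂d
      · exact prod_pp_dvd P₁ e ℓ₂
          (fun p hp => Nat.prime_of_mem_primeFactors (hPsub p (Finset.mem_of_mem_filter p hp)))
          (fun p hp => (Finset.mem_filter.mp hp).2)
  -- bound 2
  have hB2 : 2 + ∑ p ∈ P₂, p ^ e p ≤ ℓ' := by
    apply le_of_dvd_aux P₂ e 2 ℓ'
    · exact le_refl 2
    · exact hTpos ℓ' (Multiset.mem_of_mem_erase hℓ'T')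
    · intro p hp
      exact (hP_primeFactors N p (hPsub p
        (Finset.mem_of_mem_filter p (Finset.mem_of_mem_filter p hp)))).2
    · apply Nat.Coprime.mul_dvd_of_dvd_of_dvd
      · apply Nat.Coprime.prod_right
        intro q hq
        exact hoddpp q (Finset.mem_of_mem_filter q (Finset.mem_of_mem_filter q hq))
      · exact even_iff_two_dvd.mp hℓ'even
      · exact prod_pp_dvd P₂ e ℓ'
          (fun p hp => Nat.prime_of_mem_primeFactors (hPsub p
            (Finset.mem_of_mem_filter p (Finset.mem_of_mem_filter p hp))))
          (fun p hp => (Finset.mem_filter.mp hp).2)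
  -- bound 3
  have hB3 : ∑ p ∈ P₃, p ^ e p ≤ T''.sum := by
    apply core e T''
    · intro ℓ hℓ
      exact hTpos ℓ (Multiset.mem_of_mem_erase (Multiset.mem_of_mem_erase hℓ))
    · intro p hp
      exact hP_primeFactors N p (hPsub p
        (Finset.mem_of_mem_filter p (Finset.mem_of_mem_filter p hp)))
    · intro p hp
      have hpQ₁ := Finset.mem_filter.mp hp
      have hpnd' : ¬ p ^ e p ∣ ℓ' := hpQ₁.2
      have hpnd₂ : ¬ p ^ e p ∣ ℓ₂ := (Finset.mem_filter.mp hpQ₁.1).2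
      obtain ⟨ℓ, hℓT, hℓd⟩ := hwit p (hPsub p (Finset.mem_of_mem_filter p hpQ₁.1))
      have hne₂ : ℓ ≠ ℓ₂ := fun h => hpnd₂ (h ▸ hℓd)
      have hℓT' : ℓ ∈ T' := (Multiset.mem_erase_of_ne hne₂).mpr hℓT
      have hne' : ℓ ≠ ℓ' := fun h => hpnd' (h ▸ hℓd)
      exact ⟨ℓ, (Multiset.mem_erase_of_ne hne').mpr hℓT', hℓd⟩
  -- conclusion
  have hsumcard : T.sum ≤ n := by
    rw [hT, Equiv.Perm.sum_cycleType]
    simpa using Finset.card_le_univ z.support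
  omega
open Equiv Perm

lemma prime_not_dvd_prod {r : ℕ} (hr : r.Prime) (Q : Finset ℕ)
    (hQ : ∀ q ∈ Q, q.Prime) (hne : ∀ q ∈ Q, q ≠ r) : ¬ r ∣ ∏ q ∈ Q, q := by
  intro h
  obtain ⟨q, hq, hd⟩ := (Prime.dvd_finset_prod_iff hr.prime id).mp h
  exact hne q hq (((Nat.prime_dvd_prime_iff_eq hr (hQ q hq)).mp hd).symm)

lemma prod_primes_ne_zero (Q : Finset ℕ) (hQ : ∀ q ∈ Q, q.Prime) : ∏ q ∈ Q, q ≠ 0 :=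
  Finset.prod_ne_zero_iff.mpr (fun q hq => (hQ q hq).pos.ne')

lemma coprime_prod_of_not_mem {a : ℕ} (ha : a.Prime) (Q : Finset ℕ)
    (hQ : ∀ q ∈ Q, q.Prime) (hna : a ∉ Q) : Nat.Coprime a (∏ q ∈ Q, q) :=
  Nat.Coprime.prod_right (fun q hq =>
    (Nat.coprime_primes ha (hQ q hq)).mpr (fun h => hna (h ▸ hq)))

lemma lcm_finset_primes (Q : Finset ℕ) (hQ : ∀ q ∈ Q, q.Prime) :
    Q.val.lcm = ∏ q ∈ Q, q := by
  classical
  induction Q using Finset.induction_on with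
  | empty => simp
  | @insert a s ha ih =>
    have hins : (insert a s).val = a ::ₘ s.val := by
      rw [Finset.insert_val, Multiset.ndinsert_of_notMem (by simpa using ha)]
    rw [hins, Multiset.lcm_cons, ih (fun q hq => hQ q (Finset.mem_insert_of_mem hq)),
      Finset.prod_insert ha]
    exact Nat.Coprime.lcm_eq_mul
      (coprime_prod_of_not_mem (hQ a (Finset.mem_insert_self a s)) s
        (fun q hq => hQ q (Finset.mem_insert_of_mem hq)) ha)

lemma finset_sum_eq_val_sum (Q : Finset ℕ) : ∑ q ∈ Q, q = Q.val.sum := by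
  rw [Finset.sum]
  exact congrArg Multiset.sum (Multiset.map_id' Q.val)

lemma even_filter_card_zero (T : Multiset ℕ) (h : ∀ ℓ ∈ T, ¬ Even ℓ) :
    (T.sum + Multiset.card T) % 2 = 0 := by
  classical
  rw [parity_filter_even]
  have : T.filter (fun ℓ => Even ℓ) = 0 := Multiset.filter_eq_nil.mpr h
  simp [this]

/-- Existence of an even permutation whose order is a product of distinct odd primes -/
lemma ub_odd (n : ℕ) (Q : Finset ℕ) (hQ : ∀ q ∈ Q, q.Prime ∧ Odd q)
    (hsum : ∑ q ∈ Q, q ≤ n) :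
    ∃ τ : Equiv.Perm (Fin n), Equiv.Perm.sign τ = 1 ∧ orderOf τ = ∏ q ∈ Q, q := by
  classical
  have hex : ∃ g : Equiv.Perm (Fin n), g.cycleType = Q.val := by
    rw [Equiv.Perm.exists_with_cycleType_iff]
    constructor
    · rw [← finset_sum_eq_val_sum]; simpa using hsum
    · intro a ha
      exact (hQ a ha).1.two_le
  obtain ⟨g, hg⟩ := hex
  refine ⟨g, ?_, ?_⟩
  · rw [Equiv.Perm.sign_of_cycleType, hg]
    have : ((Q.val.sum + Multiset.card Q.val)) % 2 = 0 := by
      apply even_filter_card_zero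
      intro ℓ hℓ
      exact (Nat.not_even_iff_odd).mpr (hQ ℓ hℓ).2
    exact Even.neg_one_pow (Nat.even_iff.mpr this)
  · rw [← Equiv.Perm.lcm_cycleType, hg]
    exact lcm_finset_primes Q (fun q hq => (hQ q hq).1)

/-- Existence of an even permutation of order `2^a * ∏ Q` for `a ≥ 1`, `Q` distinct odd primes -/
lemma ub_even (n a : ℕ) (ha : a ≠ 0) (Q : Finset ℕ) (hQ : ∀ q ∈ Q, q.Prime ∧ Odd q)
    (hsum : 2 ^ a + 2 + ∑ q ∈ Q, q ≤ n) :
    ∃ τ : Equiv.Perm (Fin n), Equiv.Perm.sign τ = 1 ∧ orderOf τ = 2 ^ a * ∏ q ∈ Q, q := by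
  classical
  set T : Multiset ℕ := 2 ::ₘ 2 ^ a ::ₘ Q.val with hTdef
  have hex : ∃ g : Equiv.Perm (Fin n), g.cycleType = T := by
    rw [Equiv.Perm.exists_with_cycleType_iff]
    constructor
    · rw [hTdef]
      simp only [Multiset.sum_cons]
      rw [← finset_sum_eq_val_sum, Fintype.card_fin]
      omega
    · intro x hx
      rw [hTdef] at hx
      rcases Multiset.mem_cons.mp hx with rfl | hx
      · exact le_refl 2
      rcases Multiset.mem_cons.mp hx with rfl | hx
      · exact le_trans (by norm_num) (Nat.le_self_pow ha 2)
      · exact (hQ x hx).1.two_le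
  obtain ⟨g, hg⟩ := hex
  have hQprod_odd : ¬ 2 ∣ ∏ q ∈ Q, q := by
    apply prime_not_dvd_prod Nat.prime_two Q (fun q hq => (hQ q hq).1)
    intro q hq h2
    rw [h2] at hq
    exact (by decide : ¬ Odd 2) (hQ 2 hq).2
  refine ⟨g, ?_, ?_⟩
  · rw [Equiv.Perm.sign_of_cycleType, hg, hTdef]
    simp only [Multiset.sum_cons, Multiset.card_cons]
    have hodd : (Q.val.sum + Multiset.card Q.val) % 2 = 0 := by
      apply even_filter_card_zero
      intro ℓ hℓ
      exact (Nat.not_even_iff_odd).mpr (hQ ℓ hℓ).2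
    have h2a : 2 ^ a % 2 = 0 := Nat.even_iff.mp (by
      exact (Nat.even_pow).mpr ⟨even_two, ha⟩)
    apply Even.neg_one_pow
    apply Nat.even_iff.mpr
    omega
  · rw [← Equiv.Perm.lcm_cycleType, hg, hTdef]
    rw [Multiset.lcm_cons, Multiset.lcm_cons,
      lcm_finset_primes Q (fun q hq => (hQ q hq).1)]
    have h1 : lcm (2 ^ a) (∏ q ∈ Q, q) = 2 ^ a * ∏ q ∈ Q, q :=
      Nat.Coprime.lcm_eq_mul (Nat.Coprime.pow_left _
        ((Nat.prime_two.coprime_iff_not_dvd).mpr hQprod_odd))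
    rw [h1]
    apply Nat.dvd_antisymm
    · exact Nat.lcm_dvd (Dvd.dvd.mul_right (dvd_pow_self 2 ha) _) dvd_rfl
    · exact Nat.dvd_lcm_right _ _

/-- Window-4 lemma: sums of distinct odd primes hit every window `(y-4, y]`. -/
lemma ntA (y : ℕ) : ∃ Q : Finset ℕ,
    (∀ q ∈ Q, q.Prime ∧ Odd q ∧ q ≤ y) ∧ (∑ q ∈ Q, q ≤ y) ∧ y < (∑ q ∈ Q, q) + 4 := by
  induction y using Nat.strong_induction_on with
  | _ y ih =>
  rcases lt_or_ge y 4 with hy | hy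
  · exact ⟨∅, by simp, by simp, by simpa using hy⟩
  rcases lt_or_ge y 7 with hy7 | hy7
  · refine ⟨{3}, ?_, ?_, ?_⟩
    · intro q hq
      rw [Finset.mem_singleton] at hq
      subst hq
      exact ⟨by norm_num, by decide, by omega⟩
    · simp; omega
    · simp; omega
  rcases lt_or_ge y 8 with hy8 | hy8
  · have hy7' : y = 7 := by omega
    refine ⟨{5}, ?_, ?_, ?_⟩
    · intro q hq
      rw [Finset.mem_singleton] at hq
      subst hq
      exact ⟨by norm_num, by decide, by omega⟩
    · simp; omega
    · simp; omega
  -- y ≥ 8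
  obtain ⟨p, hp, hp1, hp2⟩ := Nat.exists_prime_lt_and_le_two_mul (y / 2) (by omega)
  have hple : p ≤ y := le_trans hp2 (by omega)
  have h2p : y < 2 * p := by omega
  have hp5 : 5 ≤ p := by
    have : 4 ≤ y / 2 := by omega
    omega
  obtain ⟨Q', hQ'mem, hQ'sum, hQ'win⟩ := ih (y - p) (by omega)
  have hpnot : p ∉ Q' := fun hmem => by
    have := (hQ'mem p hmem).2.2
    omega
  refine ⟨insert p Q', ?_, ?_, ?_⟩
  · intro q hq
    rcases Finset.mem_insert.mp hq with rfl | hq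
    · exact ⟨hp, hp.odd_of_ne_two (by omega), hple⟩
    · obtain ⟨h1, h2, h3⟩ := hQ'mem q hq
      exact ⟨h1, h2, by omega⟩
  · rw [Finset.sum_insert hpnot]; omega
  · rw [Finset.sum_insert hpnot]; omega

/-- Window-5 lemma: sums of distinct primes ≥ 5 hit every window `(y-5, y]`. -/
lemma ntM (y : ℕ) : ∃ Q : Finset ℕ,
    (∀ q ∈ Q, q.Prime ∧ 5 ≤ q ∧ q ≤ y) ∧ (∑ q ∈ Q, q ≤ y) ∧ y < (∑ q ∈ Q, q) + 5 := by
  induction y using Nat.strong_induction_on with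
  | _ y ih =>
  rcases lt_or_ge y 5 with hy | hy
  · exact ⟨∅, by simp, by simp, by simpa using hy⟩
  rcases lt_or_ge y 10 with hy10 | hy10
  · refine ⟨{5}, ?_, ?_, ?_⟩
    · intro q hq
      rw [Finset.mem_singleton] at hq
      subst hq
      exact ⟨by norm_num, le_refl 5, by omega⟩
    · simp; omega
    · simp; omega
  obtain ⟨p, hp, hp1, hp2⟩ := Nat.exists_prime_lt_and_le_two_mul (y / 2) (by omega)
  have hple : p ≤ y := le_trans hp2 (by omega)
  have h2p : y < 2 * p := by omega
  have hp5 : 5 ≤ p := by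
    have : 5 ≤ y / 2 := by omega
    omega
  obtain ⟨Q', hQ'mem, hQ'sum, hQ'win⟩ := ih (y - p) (by omega)
  have hpnot : p ∉ Q' := fun hmem => by
    have := (hQ'mem p hmem).2.2
    omega
  refine ⟨insert p Q', ?_, ?_, ?_⟩
  · intro q hq
    rcases Finset.mem_insert.mp hq with rfl | hq
    · exact ⟨hp, hp5, hple⟩
    · obtain ⟨h1, h2, h3⟩ := hQ'mem q hq
      exact ⟨h1, h2, by omega⟩
  · rw [Finset.sum_insert hpnot]; omega
  · rw [Finset.sum_insert hpnot]; omega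

/-- Window lemma avoiding a given prime `r ≥ 5`: sums of distinct primes in `[5, y]`,
all different from `r`, hit every window `(y - (r + 2^(log 2 r) + 2), y]`. -/
lemma ntZ (r : ℕ) (hr : r.Prime) (hr5 : 5 ≤ r) (y : ℕ) : ∃ Q : Finset ℕ,
    (∀ q ∈ Q, q.Prime ∧ 5 ≤ q ∧ q ≤ y ∧ q ≠ r) ∧ (∑ q ∈ Q, q ≤ y) ∧
    y < (∑ q ∈ Q, q) + (r + 2 ^ Nat.log 2 r + 2) := by
  have hA4 : 4 ≤ 2 ^ Nat.log 2 r := by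
    have h2 : 2 ≤ Nat.log 2 r := (Nat.le_log_iff_pow_le (by norm_num) (by omega)).mpr (by omega)
    calc (4:ℕ) = 2 ^ 2 := by norm_num
    _ ≤ 2 ^ Nat.log 2 r := Nat.pow_le_pow_right (by norm_num) h2
  have hAr : 2 ^ Nat.log 2 r ≤ r := Nat.pow_log_le_self 2 (by omega)
  set R := r + 2 ^ Nat.log 2 r + 2 with hR
  have hR11 : 11 ≤ R := by omega
  induction y using Nat.strong_induction_on with
  | _ y ih =>
  rcases lt_or_ge y R with hy | hy
  · exact ⟨∅, by simp, by simp, by simpa using hy⟩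
  -- y ≥ R ≥ 11
  obtain ⟨p, hp, hp1, hp2⟩ := Nat.exists_prime_lt_and_le_two_mul (y / 2) (by omega)
  have hple : p ≤ y := le_trans hp2 (by omega)
  have h2p : y < 2 * p := by omega
  have hp5 : 5 ≤ p := by
    have : 5 ≤ y / 2 := by omega
    omega
  by_cases hpr : p = r
  · -- Bertrand prime collided with r; here y ≤ 2r - 1
    subst hpr
    have hy2p : y ≤ 2 * p - 1 := by omega
    rcases lt_or_ge p 11 with hp11 | hp11
    · -- p = r ∈ {5, 7}
      interval_cases p
      · omega  -- r = 5 : y ≤ 9 < 11 ≤ R contradiction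
      · exact absurd hr (by decide)
      · -- r = 7 : R = 13, y = 13
        refine ⟨{5}, ?_, ?_, ?_⟩
        · intro q hq
          rw [Finset.mem_singleton] at hq
          subst hq
          exact ⟨by norm_num, le_refl 5, by omega, by omega⟩
        · simp; omega
        · simp; omega
      · exact absurd hr (by decide)
      · exact absurd hr (by decide)
      · exact absurd hr (by decide)
    · -- r ≥ 11 : use ntM at r - 1
      obtain ⟨Q, hQmem, hQsum, hQwin⟩ := ntM (p - 1)
      have h8 : 8 ≤ 2 ^ Nat.log 2 p := by
        have h3 : 3 ≤ Nat.log 2 p :=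
          (Nat.le_log_iff_pow_le (by norm_num) (by omega)).mpr (by omega)
        calc (8:ℕ) = 2 ^ 3 := by norm_num
        _ ≤ 2 ^ Nat.log 2 p := Nat.pow_le_pow_right (by norm_num) h3
      refine ⟨Q, ?_, by omega, by omega⟩
      intro q hq
      obtain ⟨h1, h2, h3⟩ := hQmem q hq
      exact ⟨h1, h2, by omega, by omega⟩
  · -- p ≠ r : recurse
    obtain ⟨Q', hQ'mem, hQ'sum, hQ'win⟩ := ih (y - p) (by omega)
    have hpnot : p ∉ Q' := fun hmem => by
      have := (hQ'mem p hmem).2.2.1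
      omega
    refine ⟨insert p Q', ?_, ?_, ?_⟩
    · intro q hq
      rcases Finset.mem_insert.mp hq with rfl | hq
      · exact ⟨hp, hp5, hple, hpr⟩
      · obtain ⟨h1, h2, h3, h4⟩ := hQ'mem q hq
        exact ⟨h1, h2, by omega, h4⟩
    · rw [Finset.sum_insert hpnot]; omega
    · rw [Finset.sum_insert hpnot]; omega
open Equiv Perm

lemma F_prod (Q : Finset ℕ) (hQ : ∀ q ∈ Q, q.Prime) :
    F (∏ q ∈ Q, q) = ∑ q ∈ Q, q := by
  classical
  induction Q using Finset.induction_on with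
  | empty => simp [F]
  | @insert a s ha ih =>
    rw [Finset.prod_insert ha, Finset.sum_insert ha,
      F_mul_coprime (hQ a (Finset.mem_insert_self a s)).pos.ne'
        (prod_primes_ne_zero s (fun q hq => hQ q (Finset.mem_insert_of_mem hq)))
        (coprime_prod_of_not_mem (hQ a (Finset.mem_insert_self a s)) s
          (fun q hq => hQ q (Finset.mem_insert_of_mem hq)) ha),
      F_prime (hQ a (Finset.mem_insert_self a s)),
      ih (fun q hq => hQ q (Finset.mem_insert_of_mem hq))]

/-- The conclusion shape of the key lemma. -/
def KeyConcl (n r : ℕ) : Prop :=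
  ∃ k : ℕ, 1 < k ∧ ¬ r ∣ k ∧
    (∃ τ : Equiv.Perm (Fin n), Equiv.Perm.sign τ = 1 ∧ orderOf τ = k) ∧
    (∀ z : Equiv.Perm (Fin n), Equiv.Perm.sign z = 1 → orderOf z ≠ r * k)

lemma final_odd (n r : ℕ) (hr : r.Prime) (hr2 : r ≠ 2) (Q : Finset ℕ)
    (hQ : ∀ q ∈ Q, q.Prime ∧ Odd q ∧ q ≠ r) (hne : Q.Nonempty)
    (h1 : ∑ q ∈ Q, q ≤ n) (h2 : n < ∑ q ∈ Q, q + r) : KeyConcl n r := by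
  classical
  set k := ∏ q ∈ Q, q with hk
  have hQp : ∀ q ∈ Q, q.Prime := fun q hq => (hQ q hq).1
  have hk0 : k ≠ 0 := prod_primes_ne_zero Q hQp
  have hrk : ¬ r ∣ k := prime_not_dvd_prod hr Q hQp (fun q hq => (hQ q hq).2.2)
  refine ⟨k, ?_, hrk, ?_, ?_⟩
  · obtain ⟨q, hq⟩ := hne
    have : q ∣ k := Finset.dvd_prod_of_mem id hq
    have := Nat.le_of_dvd (Nat.pos_of_ne_zero hk0) this
    have := (hQp q hq).two_le
    omega
  · obtain ⟨τ, hτ1, hτ2⟩ := ub_odd n Q (fun q hq => ⟨(hQ q hq).1, (hQ q hq).2.1⟩) h1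
    exact ⟨τ, hτ1, hτ2⟩
  · intro z hz hord
    have hF : F (r * k) = r + ∑ q ∈ Q, q := by
      rw [F_mul_coprime hr.pos.ne' hk0 (hr.coprime_iff_not_dvd.mpr hrk),
        F_prime hr, F_prod Q hQp]
    have := lb1 z
    rw [hord, hF] at this
    omega

lemma final_even (n r a : ℕ) (hr : r.Prime) (hr2 : r ≠ 2) (ha : a ≠ 0) (Q : Finset ℕ)
    (hQ : ∀ q ∈ Q, q.Prime ∧ Odd q ∧ q ≠ r)
    (h1 : ∑ q ∈ Q, q + 2 ^ a + 2 ≤ n) (h2 : n < ∑ q ∈ Q, q + 2 ^ a + 2 + r) :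
    KeyConcl n r := by
  classical
  set P := ∏ q ∈ Q, q with hP
  set k := 2 ^ a * P with hk
  have hQp : ∀ q ∈ Q, q.Prime := fun q hq => (hQ q hq).1
  have hP0 : P ≠ 0 := prod_primes_ne_zero Q hQp
  have hPodd : ¬ 2 ∣ P := by
    apply prime_not_dvd_prod Nat.prime_two Q hQp
    intro q hq h2'
    rw [h2'] at hq
    exact (by decide : ¬ Odd 2) (hQ 2 hq).2.1
  have hrP : ¬ r ∣ P := prime_not_dvd_prod hr Q hQp (fun q hq => (hQ q hq).2.2)
  have hrk : ¬ r ∣ k := by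
    intro hd
    rcases (Nat.Prime.dvd_mul hr).mp hd with hd | hd
    · exact hr2 ((Nat.prime_dvd_prime_iff_eq hr Nat.prime_two).mp (hr.dvd_of_dvd_pow hd))
    · exact hrP hd
  refine ⟨k, ?_, hrk, ?_, ?_⟩
  · have : 2 ≤ 2 ^ a := le_trans (by norm_num) (Nat.le_self_pow ha 2)
    have : 1 ≤ P := Nat.pos_of_ne_zero hP0
    calc 1 < 2 := by norm_num
    _ ≤ 2 ^ a := by assumption
    _ = 2 ^ a * 1 := (mul_one _).symm
    _ ≤ 2 ^ a * P := Nat.mul_le_mul_left _ (by assumption)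
  · obtain ⟨τ, hτ1, hτ2⟩ := ub_even n a ha Q (fun q hq => ⟨(hQ q hq).1, (hQ q hq).2.1⟩)
      (by omega)
    exact ⟨τ, hτ1, hτ2⟩
  · intro z hz hord
    have hco2 : Nat.Coprime (2 ^ a) P := Nat.Coprime.pow_left _
      (Nat.prime_two.coprime_iff_not_dvd.mpr hPodd)
    have hk0 : k ≠ 0 := by positivity
    have hF : F (r * k) = r + 2 ^ a + ∑ q ∈ Q, q := by
      rw [F_mul_coprime hr.pos.ne' hk0 (hr.coprime_iff_not_dvd.mpr hrk), F_prime hr, hk,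
        F_mul_coprime (by positivity) hP0 hco2, F_prime_pow Nat.prime_two ha, F_prod Q hQp]
      ring
    have h2dvd : 2 ∣ orderOf z := by
      rw [hord, hk]
      exact Dvd.dvd.mul_left (Dvd.dvd.mul_right (dvd_pow_self 2 ha) _) r
    have := lb2 z hz h2dvd
    rw [hord, hF] at this
    omega
open Equiv Perm

lemma key (n r : ℕ) (hn : 4 ≤ n) (hr : r.Prime) (hrn : r ≤ n) : KeyConcl n r := by
  classical
  rcases eq_or_ne r 2 with rfl | hr2
  · -- r = 2 : odd k with sum in (n-4, n]
    obtain ⟨Q, hQmem, hQsum, hQwin⟩ := ntA n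
    have hQp : ∀ q ∈ Q, q.Prime := fun q hq => (hQmem q hq).1
    set k := ∏ q ∈ Q, q with hk
    have hk0 : k ≠ 0 := prod_primes_ne_zero Q hQp
    have h2k : ¬ 2 ∣ k := by
      apply prime_not_dvd_prod Nat.prime_two Q hQp
      intro q hq hq2
      rw [hq2] at hq
      exact (by decide : ¬ Odd 2) (hQmem 2 hq).2.1
    have hne : Q.Nonempty := by
      rcases Q.eq_empty_or_nonempty with rfl | h
      · exfalso
        rw [Finset.sum_empty] at hQwin
        omega
      · exact h
    refine ⟨k, ?_, h2k, ?_, ?_⟩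
    · obtain ⟨q, hq⟩ := hne
      have hd : q ∣ k := Finset.dvd_prod_of_mem id hq
      have := Nat.le_of_dvd (Nat.pos_of_ne_zero hk0) hd
      have := (hQp q hq).two_le
      omega
    · exact ub_odd n Q (fun q hq => ⟨(hQmem q hq).1, (hQmem q hq).2.1⟩) hQsum
    · intro z hz hord
      have hF : F (2 * k) = 2 + ∑ q ∈ Q, q := by
        rw [F_mul_coprime (by norm_num) hk0 (Nat.prime_two.coprime_iff_not_dvd.mpr h2k),
          F_prime Nat.prime_two, F_prod Q hQp]
      have := lb2 z hz (by rw [hord]; exact Dvd.intro k rfl)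
      rw [hord, hF] at this
      omega
  rcases eq_or_ne r 3 with rfl | hr3
  · -- r = 3
    obtain ⟨Q, hQmem, hQsum, hQwin⟩ := ntM (n - 4)
    have hQ' : ∀ q ∈ Q, q.Prime ∧ Odd q ∧ q ≠ 3 := fun q hq => by
      obtain ⟨h1, h2, h3⟩ := hQmem q hq
      exact ⟨h1, h1.odd_of_ne_two (by omega), by omega⟩
    by_cases hc : n < ∑ q ∈ Q, q + 7
    · apply final_even n 3 1 (by norm_num) (by norm_num) (by norm_num) Q hQ'
      · omega
      · simpa using hc
    · apply final_even n 3 2 (by norm_num) (by norm_num) (by norm_num) Q hQ'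
      · push_neg at hc
        omega
      · norm_num
        omega
  -- r ≥ 5
  have hr5 : 5 ≤ r := by
    by_contra h
    push_neg at h
    interval_cases r
    · exact absurd hr (by decide)
    · exact absurd hr (by decide)
    · exact hr2 rfl
    · exact hr3 rfl
    · exact absurd hr (by decide)
  obtain ⟨Q, hQmem, hQsum, hQwin⟩ := ntZ r hr hr5 n
  have hQ' : ∀ q ∈ Q, q.Prime ∧ Odd q ∧ q ≠ r := fun q hq => by
    obtain ⟨h1, h2, h3, h4⟩ := hQmem q hq
    exact ⟨h1, h1.odd_of_ne_two (by omega), h4⟩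
  by_cases hc : n < ∑ q ∈ Q, q + r
  · apply final_odd n r hr hr2 Q hQ' ?_ hQsum hc
    rcases Q.eq_empty_or_nonempty with rfl | h
    · exfalso
      rw [Finset.sum_empty] at hc
      omega
    · exact h
  · push_neg at hc
    have hAr : 2 ^ Nat.log 2 r ≤ r := Nat.pow_log_le_self 2 (by omega)
    have hA2 : 2 ≤ Nat.log 2 r :=
      (Nat.le_log_iff_pow_le (by norm_num) (by omega)).mpr (by omega)
    have hex : ∃ j, n < ∑ q ∈ Q, q + 2 ^ (j + 1) + 2 + r := by
      refine ⟨Nat.log 2 r - 1, ?_⟩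
      have hpow : 2 ^ (Nat.log 2 r - 1 + 1) = 2 ^ Nat.log 2 r := by
        congr 1
        omega
      rw [hpow]
      omega
    set j := Nat.find hex with hj
    have hspec : n < ∑ q ∈ Q, q + 2 ^ (j + 1) + 2 + r := Nat.find_spec hex
    have hjle : j ≤ Nat.log 2 r - 1 := Nat.find_le (by
      have hpow : 2 ^ (Nat.log 2 r - 1 + 1) = 2 ^ Nat.log 2 r := by
        congr 1
        omega
      rw [hpow]
      omega)
    have h2j : 2 ^ j ≤ r := le_trans
      (Nat.pow_le_pow_right (by norm_num) (by omega)) hAr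
    have h1 : ∑ q ∈ Q, q + 2 ^ (j + 1) + 2 ≤ n := by
      rcases Nat.eq_zero_or_pos j with hj0 | hj0
      · rw [hj0]
        norm_num
        omega
      · have hmin : ¬ n < ∑ q ∈ Q, q + 2 ^ (j - 1 + 1) + 2 + r :=
          Nat.find_min hex (by omega)
        have hpow : 2 ^ (j - 1 + 1) = 2 ^ j := by congr 1; omega
        rw [hpow] at hmin
        push_neg at hmin
        have hpow2 : 2 ^ (j + 1) = 2 ^ j + 2 ^ j := by rw [pow_succ]; ring
        omega
    exact final_even n r (j + 1) hr hr2 (by omega) Q hQ' h1 hspec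
end AltNT

/-- For `n ≥ 4`, the identity is the only dominant vertex of the order super commuting
graph of the alternating group `A_n`. -/
theorem isDominantVertex_orderSuper_commutingGraph_alternatingGroup_iff
    (n : ℕ) (hn : 4 ≤ n) (σ : alternatingGroup (Fin n)) :
    IsDominantVertex (orderSuper (alternatingGroup (Fin n))
      (commutingGraph (alternatingGroup (Fin n)))) σ ↔ σ = 1 := by
  constructor
  · intro h
    by_contra hσ1
    set m := orderOf σ with hm
    have hm1 : m ≠ 1 := fun h1 => hσ1 (orderOf_eq_one_iff.mp h1)
    have hm0 : m ≠ 0 := (orderOf_pos σ).ne'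
    set r := m.minFac with hr
    have hrp : r.Prime := Nat.minFac_prime hm1
    have hrm : r ∣ m := Nat.minFac_dvd m
    have hmval : orderOf (σ : Equiv.Perm (Fin n)) = m := Subgroup.orderOf_coe σ
    have hrn : r ≤ n := by
      have hFm := AltNT.lb1 (σ : Equiv.Perm (Fin n))
      rw [hmval] at hFm
      have hrmem : r ∈ m.primeFactors := Nat.mem_primeFactors.mpr ⟨hrp, hrm, hm0⟩
      have hterm : r ≤ r ^ m.factorization r :=
        Nat.le_self_pow (AltNT.factorization_ne_zero hrmem) r
      have hsle : r ^ m.factorization r ≤ AltNT.F m :=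
        Finset.single_le_sum (f := fun p => p ^ m.factorization p)
          (fun i _ => Nat.zero_le _) hrmem
      omega
    obtain ⟨k, hk1, hrk, ⟨τ, hτsign, hτord⟩, hnon⟩ := AltNT.key n r hn hrp hrn
    set w : alternatingGroup (Fin n) :=
      ⟨τ, Equiv.Perm.mem_alternatingGroup.mpr hτsign⟩ with hw
    have hword : orderOf w = k := by
      rw [hw, Subgroup.orderOf_mk]
      exact hτord
    have hmk : m ≠ k := fun hmk => hrk (hmk ▸ hrm)
    have hwne : w ≠ σ := fun hws => hmk (by rw [← hword, hws])
    have hadj := h w hwne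
    rw [orderSuper, SimpleGraph.fromRel_adj] at hadj
    obtain ⟨hne', hrel⟩ := hadj
    have hpair : ∃ x' y' : alternatingGroup (Fin n),
        orderOf x' = m ∧ orderOf y' = k ∧ Commute x' y' := by
      have extract : ∀ a b : alternatingGroup (Fin n),
          (commutingGraph (alternatingGroup (Fin n))).Adj a b → Commute a b := by
        intro a b hab
        rw [commutingGraph, SimpleGraph.fromRel_adj] at hab
        rcases hab.2 with hc | hc
        · exact hc
        · exact hc.symm
      rcases hrel with (hOrd | ⟨x', y', hx, hy, hA⟩) | (hOrd | ⟨x', y', hx, hy, hA⟩)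
      · exact absurd ((hm.trans hOrd).trans hword) hmk
      · exact ⟨x', y', by rwa [← hm] at hx, by rwa [hword] at hy, extract _ _ hA⟩
      · exact absurd ((hm.trans hOrd.symm).trans hword) hmk
      · exact ⟨y', x', by rwa [← hm] at hy, by rwa [hword] at hx, (extract _ _ hA).symm⟩
    obtain ⟨x', y', hxm, hyk, hcomm⟩ := hpair
    have hmr0 : m / r ≠ 0 := by
      have : r ≤ m := Nat.le_of_dvd (Nat.pos_of_ne_zero hm0) hrm
      have := Nat.div_pos this hrp.pos
      omega
    have hum : orderOf (x' ^ (m / r)) = r := by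
      rw [orderOf_pow' x' hmr0, hxm, Nat.gcd_eq_right (Nat.div_dvd_of_dvd hrm),
        Nat.div_div_self hrm hm0]
    have hcomm' : Commute (x' ^ (m / r)) y' := hcomm.pow_left _
    have hcop : Nat.Coprime (orderOf (x' ^ (m / r))) (orderOf y') := by
      rw [hum, hyk]
      exact hrp.coprime_iff_not_dvd.mpr hrk
    have hordz : orderOf (x' ^ (m / r) * y') = r * k := by
      rw [hcomm'.orderOf_mul_eq_mul_orderOf_of_coprime hcop, hum, hyk]
    apply hnon ((x' ^ (m / r) * y' : alternatingGroup (Fin n)) : Equiv.Perm (Fin n))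
      (Equiv.Perm.mem_alternatingGroup.mp (x' ^ (m / r) * y').2)
    rw [Subgroup.orderOf_coe]
    exact hordz
  · rintro rfl
    intro w hw
    rw [orderSuper, SimpleGraph.fromRel_adj]
    refine ⟨hw.symm.symm.symm, Or.inl (Or.inr ⟨1, w, rfl, rfl, ?_⟩)⟩
    rw [commutingGraph, SimpleGraph.fromRel_adj]
    exact ⟨hw.symm, Or.inl (by rw [one_mul, mul_one])⟩
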